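/- Let (R,𝓡) be a filtered ring such that the associated graded ring Gr𝓡 is left noetherian, let (M,𝓜) be a filtered left R-module whose 𝓡-filtration 𝓜 is good, and let N be a left R-submodule of M with the induced filtration 𝓝 given by F_i𝓝 = F_i𝓜 ∩ N. Then 𝓝 is a good 𝓡-filtration of N. -/

import Mathlib

namespace FilteredPaper

variable {R : Type} [Ring R]

/-- `F` is a filtration of the ring `R`. -/
structure IsRingFiltration (F : ℤ → AddSubgroup R) : Prop where
  exhaustive : ∀ r : R, ∃ i, r ∈ F i
  mono : ∀ i : ℤ, F (i - 1) ≤ F i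
  mul_mem : ∀ {i j : ℤ} {r s : R}, r ∈ F i → s ∈ F j → r * s ∈ F (i + j)
  bot : ∀ i < 0, F i = ⊥
  one_mem : (1 : R) ∈ F 0

/-- `FM` is an `F`-filtration of the left `R`-module `M`. -/
structure IsModuleFiltration (F : ℤ → AddSubgroup R) {M : Type} [AddCommGroup M]
    [Module R M] (FM : ℤ → AddSubgroup M) : Prop where
  exhaustive : ∀ m : M, ∃ i, m ∈ FM i
  mono : ∀ i : ℤ, FM (i - 1) ≤ FM i
  smul_mem : ∀ {i j : ℤ} {r : R} {m : M}, r ∈ F i → m ∈ FM j → r • m ∈ FM (i + j)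

/-- A realization of the associated graded ring `Gr𝓡 = ⊕ᵢ Fᵢ/Fᵢ₋₁` of the filtered ring
`(R,F)` as a ring `A`: the map `emb i` sends `x ∈ Fᵢ` to its symbol
`σᵢ(x) = x + Fᵢ₋₁ ∈ Grᵢ𝓡 ⊆ A`; it is additive with kernel `Fᵢ₋₁`, the symbol maps are
multiplicative, and `A` is the internal direct sum of the images. -/
structure GrRingReal (F : ℤ → AddSubgroup R) (A : Type) [Ring A] where
  emb : ∀ i : ℤ, F i →+ A
  emb_eq_zero_iff : ∀ (i : ℤ) (x : F i), emb i x = 0 ↔ (x : R) ∈ F (i - 1)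
  emb_mul : ∀ (i j : ℤ) (x : F i) (y : F j) (h : (x : R) * (y : R) ∈ F (i + j)),
      emb i x * emb j y = emb (i + j) ⟨(x : R) * y, h⟩
  emb_one : ∀ h : (1 : R) ∈ F 0, emb 0 ⟨1, h⟩ = 1
  internal : DirectSum.IsInternal fun i : ℤ => (emb i).range

/-- A realization of the associated graded module `Gr𝓜 = ⊕ᵢ FMᵢ/FMᵢ₋₁` of a filtered
left `R`-module `(M,FM)` as a left module `G` over (a realization `A` of) `Gr𝓡`. -/
structure GrModuleReal (F : ℤ → AddSubgroup R) {M : Type} [AddCommGroup M] [Module R M]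
    (FM : ℤ → AddSubgroup M) {A : Type} [Ring A] (re : GrRingReal F A)
    (G : Type) [AddCommGroup G] [Module A G] where
  emb : ∀ i : ℤ, FM i →+ G
  emb_eq_zero_iff : ∀ (i : ℤ) (x : FM i), emb i x = 0 ↔ (x : M) ∈ FM (i - 1)
  emb_smul : ∀ (i j : ℤ) (r : F i) (m : FM j) (h : (r : R) • (m : M) ∈ FM (i + j)),
      re.emb i r • emb j m = emb (i + j) ⟨(r : R) • (m : M), h⟩
  internal : DirectSum.IsInternal fun i : ℤ => (emb i).range

/-- The ideal `Gr𝓢` of (the realization `A` of) `Gr𝓡` determined by a subset `S ⊆ R`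
carrying the induced filtration `Fᵢ ∩ S`: it is generated (indeed spanned) by the
symbols of the elements of `S`. -/
def grIdealOf {F : ℤ → AddSubgroup R} {A : Type} [Ring A] (re : GrRingReal F A)
    (S : Set R) : Ideal A :=
  Ideal.span {a : A | ∃ (i : ℤ) (x : F i), (x : R) ∈ S ∧ re.emb i x = a}

/-- The induced filtration on the quotient module `M ⧸ N`. -/
def quotFil {M : Type} [AddCommGroup M] [Module R M] (FM : ℤ → AddSubgroup M)
    (N : Submodule R M) : ℤ → AddSubgroup (M ⧸ N) :=
  fun i => (FM i).map N.mkQ.toAddMonoidHom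

/-- `FM` is a good `F`-filtration of the left `R`-module `M`:
`FMᵢ = Σⱼ F_{i-pⱼ} · gⱼ` for finitely many `gⱼ ∈ M`, `pⱼ ∈ ℤ`. -/
def IsGoodFiltration (F : ℤ → AddSubgroup R) {M : Type} [AddCommGroup M] [Module R M]
    (FM : ℤ → AddSubgroup M) : Prop :=
  IsModuleFiltration F FM ∧
  ∃ (t : ℕ) (g : Fin t → M) (p : Fin t → ℤ), ∀ i : ℤ,
    FM i = ⨆ j : Fin t, (F (i - p j)).map ((smulAddHom R M).flip (g j))

/-- The filtration induced by `FM` on a submodule `N ≤ M` is good (with the generators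
`gⱼ` lying in `N`, the equality being read inside `M`). -/
def InducedGoodOn (F : ℤ → AddSubgroup R) {M : Type} [AddCommGroup M] [Module R M]
    (FM : ℤ → AddSubgroup M) (N : Submodule R M) : Prop :=
  ∃ (t : ℕ) (g : Fin t → M) (p : Fin t → ℤ), (∀ j, g j ∈ N) ∧
    ∀ i : ℤ, FM i ⊓ N.toAddSubgroup =
      ⨆ j : Fin t, (F (i - p j)).map ((smulAddHom R M).flip (g j))

end FilteredPaper

namespace FilteredAux

open Submodule

/-- membership in a finite iSup of additive subgroups gives a sum decomposition -/
lemma mem_fin_iSup {M : Type} [AddCommGroup M] {t : ℕ} (H : Fin t → AddSubgroup M) {x : M}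
    (hx : x ∈ ⨆ j, H j) : ∃ f : ∀ j, H j, x = ∑ j, (f j : M) := by
  let K : AddSubgroup M :=
    { carrier := {y | ∃ f : ∀ j, H j, y = ∑ j, (f j : M)}
      zero_mem' := ⟨0, by simp⟩
      add_mem' := by
        rintro a b ⟨f, rfl⟩ ⟨f', rfl⟩
        exact ⟨f + f', by simp [Finset.sum_add_distrib]⟩
      neg_mem' := by
        rintro a ⟨f, rfl⟩
        exact ⟨-f, by simp⟩ }
  have hle : (⨆ j, H j) ≤ K := by
    refine iSup_le fun j y hy => ?_
    refine ⟨Function.update (0 : ∀ j, H j) j ⟨y, hy⟩, ?_⟩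
    rw [Finset.sum_eq_single j]
    · simp
    · intro b _ hb
      simp [Function.update_of_ne hb]
    · simp
  exact hle hx

/-- a finitely generated span is the span of a finite subset -/
lemma span_fg_finset {R M : Type*} [Ring R] [AddCommGroup M] [Module R M] {S : Set M}
    (h : (Submodule.span R S).FG) :
    ∃ T : Finset M, ↑T ⊆ S ∧ Submodule.span R (T : Set M) = Submodule.span R S := by
  obtain ⟨G, hG⟩ := h
  have hy : ∀ y : G, ∃ T : Finset M, ↑T ⊆ S ∧ (y : M) ∈ Submodule.span R (T : Set M) := by
    intro y
    have : (y : M) ∈ Submodule.span R S := by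
      rw [← hG]; exact Submodule.subset_span y.2
    exact Submodule.mem_span_finite_of_mem_span this
  choose Tf hTf1 hTf2 using hy
  classical
  refine ⟨G.attach.biUnion Tf, ?_, ?_⟩
  · intro x hx
    simp only [Finset.coe_biUnion, Set.mem_iUnion, Finset.mem_coe] at hx
    obtain ⟨y, _, hy⟩ := hx
    exact hTf1 y hy
  · refine le_antisymm (Submodule.span_le.2 fun x hx => ?_) ?_
    · simp only [Finset.coe_biUnion, Set.mem_iUnion, Finset.mem_coe] at hx
      obtain ⟨y, _, hy⟩ := hx
      exact Submodule.subset_span (hTf1 y hy)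
    · rw [← hG]
      refine Submodule.span_le.2 fun y hy => ?_
      refine Submodule.span_mono (Finset.coe_subset.2 ?_) (hTf2 ⟨y, hy⟩)
      exact Finset.subset_biUnion_of_mem Tf (Finset.mem_attach _ ⟨y, hy⟩)

end FilteredAux




open FilteredPaper FilteredAux DirectSum in
theorem statement_19 (R : Type) [Ring R] (F : ℤ → AddSubgroup R)
    (hF : IsRingFiltration F)
    (A : Type) [Ring A] (re : GrRingReal F A) (hA : IsNoetherianRing A)
    (M : Type) [AddCommGroup M] [Module R M]
    (FM : ℤ → AddSubgroup M) (hFM : IsGoodFiltration F FM)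
    (N : Submodule R M) :
    InducedGoodOn F FM N := by
  classical
  obtain ⟨hMF, t, g, p, hgood⟩ := hFM
  -- monotonicity of F and FM
  have Fmono : ∀ {a b : ℤ}, a ≤ b → F a ≤ F b := by
    intro a b hab
    refine Int.le_induction (motive := fun b _ => F a ≤ F b) le_rfl (fun n _ ih => le_trans ih ?_) b hab
    have := hF.mono (n + 1); rwa [add_sub_cancel_right] at this
  have FMmono : ∀ {a b : ℤ}, a ≤ b → FM a ≤ FM b := by
    intro a b hab
    refine Int.le_induction (motive := fun b _ => FM a ≤ FM b) le_rfl (fun n _ ih => le_trans ih ?_) b hab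
    have := hMF.mono (n + 1); rwa [add_sub_cancel_right] at this
  -- helper for reindexing symbols
  have emb_congr : ∀ {d d' : ℤ} (h : d = d') (x : R) (hx : x ∈ F d) (hx' : x ∈ F d'),
      re.emb d ⟨x, hx⟩ = re.emb d' ⟨x, hx'⟩ := by
    intro d d' h x hx hx'; subst h; rfl
  -- the grading on A
  set 𝒜 : ℤ → AddSubgroup A := fun i => (re.emb i).range with h𝒜
  haveI gm : SetLike.GradedMonoid 𝒜 :=
    { one_mem := ⟨⟨1, hF.one_mem⟩, re.emb_one hF.one_mem⟩
      mul_mem := by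
        rintro i j a b ⟨x, rfl⟩ ⟨y, rfl⟩
        exact ⟨⟨(x : R) * y, hF.mul_mem x.2 y.2⟩,
          (re.emb_mul i j x y (hF.mul_mem x.2 y.2)).symm⟩ }
  haveI gr : GradedRing 𝒜 := { gm, re.internal.chooseDecomposition with }
  -- the set of symbol vectors coming from N
  set S : Set (Fin t → A) := {v | ∃ (i : ℤ) (r : ∀ j, F (i - p j)) (n m' : M),
      n ∈ N ∧ m' ∈ FM (i - 1) ∧ (∀ j, v j = re.emb (i - p j) (r j)) ∧
      (∑ j, (r j : R) • g j) = n + m'} with hS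
  haveI : IsNoetherian A A := hA
  have hfg : (Submodule.span A S).FG := IsNoetherian.noetherian _
  obtain ⟨Tset, hTS, hTspan⟩ := span_fg_finset hfg
  set s := Tset.card with hs
  set e := Tset.equivFin with he
  set vv : Fin s → (Fin t → A) := fun k => (e.symm k : Fin t → A) with hvv
  have hrange : Set.range vv = (Tset : Set (Fin t → A)) := by
    ext y
    constructor
    · rintro ⟨k, rfl⟩; exact (e.symm k).2
    · intro hy; exact ⟨e ⟨y, hy⟩, by simp [hvv]⟩
  have hvvS : ∀ k, vv k ∈ S := fun k => hTS (e.symm k).2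
  have hW : ∀ k, ∃ (ik : ℤ) (rk : ∀ j, F (ik - p j)) (nk mk : M),
      nk ∈ N ∧ mk ∈ FM (ik - 1) ∧ (∀ j, vv k j = re.emb (ik - p j) (rk j)) ∧
      (∑ j, (rk j : R) • g j) = nk + mk := fun k => hvvS k
  choose iK rK nK mK hNmem hMKmem hv hsum using hW
  -- generators lie in the right filtration degree
  have hnK : ∀ k, nK k ∈ FM (iK k) := by
    intro k
    have h1 : (∑ j, (rK k j : R) • g j) ∈ FM (iK k) := by
      rw [hgood (iK k)]
      refine sum_mem fun j _ => ?_
      exact le_iSup (fun j => (F (iK k - p j)).map ((smulAddHom R M).flip (g j))) j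
        ⟨(rK k j : R), (rK k j).2, rfl⟩
    have h2 : nK k = (∑ j, (rK k j : R) • g j) - mK k := by rw [hsum k]; abel
    rw [h2]
    exact sub_mem h1 (FMmono (by omega) (hMKmem k))
  -- lower bound below which FM vanishes
  set i0 : ℤ := -(∑ j, |p j|) - 1 with hi0
  have hi0lt : ∀ j, i0 < p j := by
    intro j
    have h1 : |p j| ≤ ∑ j', |p j'| :=
      Finset.single_le_sum (fun j' _ => abs_nonneg (p j')) (Finset.mem_univ j)
    have h2 : -|p j| ≤ p j := neg_abs_le _
    omega
  have FMbot : ∀ i ≤ i0, FM i = ⊥ := by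
    intro i hi
    rw [hgood i]
    refine le_antisymm (iSup_le fun j => ?_) bot_le
    rw [hF.bot (i - p j) (by have := hi0lt j; omega)]
    simp
  -- the target filtration on N
  set T : ℤ → AddSubgroup M :=
    fun i => ⨆ k, (F (i - iK k)).map ((smulAddHom R M).flip (nK k)) with hT
  have Tmono : ∀ {a b : ℤ}, a ≤ b → T a ≤ T b := by
    intro a b hab
    exact iSup_mono fun k => AddSubgroup.map_mono (Fmono (by omega))
  -- main claim by induction
  have claim : ∀ n : ℕ, ∀ i : ℤ, i ≤ i0 + n → ∀ x, x ∈ FM i → x ∈ N → x ∈ T i := by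
    intro n
    induction n with
    | zero =>
      intro i hi x hx _
      rw [FMbot i (by omega)] at hx
      simp only [AddSubgroup.mem_bot] at hx
      rw [hx]; exact zero_mem _
    | succ n ih =>
      intro i hi x hx hxN
      rw [hgood i] at hx
      obtain ⟨f, hxf⟩ := mem_fin_iSup _ hx
      have hfj : ∀ j, ∃ r : R, r ∈ F (i - p j) ∧ r • g j = (f j : M) := by
        intro j
        obtain ⟨r, hr, hrg⟩ := (f j).2
        exact ⟨r, hr, hrg⟩
      choose r hr hrg using hfj
      have hxsum : x = ∑ j, r j • g j := by
        rw [hxf]; exact Finset.sum_congr rfl fun j _ => (hrg j).symm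
      -- the symbol vector of x
      set v : Fin t → A := fun j => re.emb (i - p j) ⟨r j, hr j⟩ with hvdef
      have hvS : v ∈ S := ⟨i, fun j => ⟨r j, hr j⟩, x, 0, hxN, zero_mem _,
        fun j => rfl, by rw [add_zero]; exact hxsum.symm⟩
      have hvspan : v ∈ Submodule.span A (Set.range vv) := by
        rw [hrange, hTspan]
        exact Submodule.subset_span hvS
      obtain ⟨c, hc⟩ := (Submodule.mem_span_range_iff_exists_fun A).mp hvspan
      have hscEx : ∀ k, ∃ sck : F (i - iK k),
          re.emb (i - iK k) sck = ↑(DirectSum.decompose 𝒜 (c k) (i - iK k)) :=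
        fun k => AddMonoidHom.mem_range.mp (DirectSum.decompose 𝒜 (c k) (i - iK k)).2
      choose sc hsc using hscEx
      have key : ∀ j, (r j) - ∑ k, (sc k : R) * (rK k j : R) ∈ F (i - 1 - p j) := by
        intro j
        have hmul : ∀ k, (sc k : R) * (rK k j : R) ∈ F (i - p j) := by
          intro k
          have := hF.mul_mem (sc k).2 (rK k j).2
          rwa [sub_add_sub_cancel] at this
        have hvj : v j ∈ 𝒜 (i - p j) := ⟨⟨r j, hr j⟩, rfl⟩
        have e1 : v j = ∑ k, c k * vv k j := by
          rw [← hc]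
          simp [Finset.sum_apply]
        have e2 : ∀ k, (↑(DirectSum.decompose 𝒜 (c k * vv k j) (i - p j)) : A)
            = re.emb (i - iK k) (sc k) * vv k j := by
          intro k
          have hb : vv k j ∈ 𝒜 (iK k - p j) := by rw [hv k j]; exact ⟨rK k j, rfl⟩
          have h3 := DirectSum.coe_decompose_mul_add_of_right_mem 𝒜 (a := c k)
            (i := i - iK k) hb
          rw [sub_add_sub_cancel] at h3
          rw [h3, hsc k]
        have e3 : re.emb (i - p j) ⟨r j, hr j⟩
            = ∑ k, re.emb (i - iK k) (sc k) * vv k j := by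
          have h4 : (↑(DirectSum.decompose 𝒜 (v j) (i - p j)) : A) = v j :=
            DirectSum.decompose_of_mem_same 𝒜 hvj
          calc re.emb (i - p j) ⟨r j, hr j⟩ = v j := rfl
            _ = ↑(DirectSum.decompose 𝒜 (v j) (i - p j)) := h4.symm
            _ = ↑(DirectSum.decompose 𝒜 (∑ k, c k * vv k j) (i - p j)) := by rw [← e1]
            _ = ∑ k, (↑(DirectSum.decompose 𝒜 (c k * vv k j) (i - p j)) : A) := by
                rw [DirectSum.decompose_sum, DFinsupp.finset_sum_apply]
                exact AddSubmonoidClass.coe_finset_sum _ _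
            _ = ∑ k, re.emb (i - iK k) (sc k) * vv k j :=
                Finset.sum_congr rfl fun k _ => e2 k
        have e4 : ∀ k, re.emb (i - iK k) (sc k) * vv k j
            = re.emb (i - p j) ⟨(sc k : R) * rK k j, hmul k⟩ := by
          intro k
          rw [hv k j, re.emb_mul _ _ _ _ (hF.mul_mem (sc k).2 (rK k j).2)]
          exact emb_congr (sub_add_sub_cancel _ _ _) _ _ _
        have e5 : re.emb (i - p j)
            (⟨r j, hr j⟩ - ∑ k, ⟨(sc k : R) * rK k j, hmul k⟩) = 0 := by
          rw [map_sub, map_sum, e3, Finset.sum_congr rfl fun k _ => e4 k]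
          exact sub_self _
        have e6 := (re.emb_eq_zero_iff _ _).mp e5
        have e7 : ((⟨r j, hr j⟩ - ∑ k, ⟨(sc k : R) * rK k j, hmul k⟩ : F (i - p j)) : R)
            = r j - ∑ k, (sc k : R) * rK k j := by
          push_cast
          rfl
        rw [e7] at e6
        rwa [show i - p j - 1 = i - 1 - p j by ring] at e6
      set y : M := ∑ k, (sc k : R) • nK k with hy
      have hyT : y ∈ T i := by
        refine sum_mem fun k _ => ?_
        exact le_iSup (fun k => (F (i - iK k)).map ((smulAddHom R M).flip (nK k))) k
          ⟨(sc k : R), (sc k).2, rfl⟩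
      have hyN : y ∈ N := Submodule.sum_mem _ fun k _ => N.smul_mem _ (hNmem k)
      have hxy : x - y ∈ FM (i - 1) := by
        have expand : ∀ j, (r j) • g j
            = ((r j) - ∑ k, (sc k : R) * rK k j) • g j
              + ∑ k, ((sc k : R) * rK k j) • g j := by
          intro j
          rw [← Finset.sum_smul, ← add_smul, sub_add_cancel]
        have hx2 : x = (∑ j, ((r j) - ∑ k, (sc k : R) * rK k j) • g j)
            + (y + ∑ k, (sc k : R) • mK k) := by
          calc x = ∑ j, r j • g j := hxsum
            _ = ∑ j, (((r j) - ∑ k, (sc k : R) * rK k j) • g j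
                + ∑ k, ((sc k : R) * rK k j) • g j) :=
                Finset.sum_congr rfl fun j _ => expand j
            _ = (∑ j, ((r j) - ∑ k, (sc k : R) * rK k j) • g j)
                + ∑ j, ∑ k, ((sc k : R) * rK k j) • g j := Finset.sum_add_distrib
            _ = (∑ j, ((r j) - ∑ k, (sc k : R) * rK k j) • g j)
                + (y + ∑ k, (sc k : R) • mK k) := by
                congr 1
                rw [Finset.sum_comm]
                have hk : ∀ k, ∑ j, ((sc k : R) * rK k j) • g j
                    = (sc k : R) • (nK k + mK k) := by
                  intro k
                  rw [← hsum k, Finset.smul_sum]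
                  exact Finset.sum_congr rfl fun j _ => (mul_smul _ _ _)
                rw [Finset.sum_congr rfl fun k _ => hk k]
                simp [smul_add, Finset.sum_add_distrib, hy]
        have hterm1 : (∑ j, ((r j) - ∑ k, (sc k : R) * rK k j) • g j) ∈ FM (i - 1) := by
          rw [hgood (i - 1)]
          refine sum_mem fun j _ => ?_
          exact le_iSup (fun j => (F (i - 1 - p j)).map ((smulAddHom R M).flip (g j))) j
            ⟨_, key j, rfl⟩
        have hterm2 : (∑ k, (sc k : R) • mK k) ∈ FM (i - 1) := by
          refine sum_mem fun k _ => ?_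
          have := hMF.smul_mem (sc k).2 (hMKmem k)
          rwa [show (i - iK k) + (iK k - 1) = i - 1 by ring] at this
        have hsub : x - y = (∑ j, ((r j) - ∑ k, (sc k : R) * rK k j) • g j)
            + ∑ k, (sc k : R) • mK k := by
          rw [hx2]; abel
        rw [hsub]
        exact add_mem hterm1 hterm2
      have hxyT : x - y ∈ T (i - 1) :=
        ih (i - 1) (by push_cast at hi ⊢; omega) _ hxy (N.sub_mem hxN hyN)
      have hfin : (x - y) + y = x := sub_add_cancel x y
      rw [← hfin]
      exact add_mem (Tmono (by omega) hxyT) hyT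
  -- conclusion
  refine ⟨s, nK, iK, hNmem, fun i => ?_⟩
  refine le_antisymm ?_ ?_
  · intro x hx
    obtain ⟨hx1, hx2⟩ := hx
    exact claim (i - i0).toNat i (by omega) x hx1 hx2
  · refine iSup_le fun k => ?_
    rintro x ⟨rr, hrr, rfl⟩
    constructor
    · have := hMF.smul_mem hrr (hnK k)
      have heq : (i - iK k) + iK k = i := by ring
      rw [heq] at this
      exact this
    · exact N.smul_mem _ (hNmem k)
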